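/- Let G be an R-group, g ∈ G, and n a positive integer. If c lies in the centralizer C_G(g^n), then c lies in the centralizer C_G(g); consequently C_G(g^n) = C_G(g). -/
import Mathlib


/-- Let `G` be an R-group (i.e. `g ^ n = h ^ n` with `n ≥ 1` implies `g = h`),
`g ∈ G`, and `n` a positive integer.  If `c` lies in the centralizer of `g ^ n`,
then `c` lies in the centralizer of `g`; consequently the two centralizers agree. -/
theorem stmt2 {G : Type*} [Group G]
    (hR : ∀ (g h : G) (n : ℕ), 1 ≤ n → g ^ n = h ^ n → g = h)
    (g : G) (n : ℕ) (hn : 0 < n) :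
    (∀ c ∈ Subgroup.centralizer {g ^ n}, c ∈ Subgroup.centralizer {g}) ∧
      Subgroup.centralizer {g ^ n} = Subgroup.centralizer ({g} : Set G) := by
  have fwd : ∀ c ∈ Subgroup.centralizer {g ^ n}, c ∈ Subgroup.centralizer {g} := by
    intro c hc
    rw [Subgroup.mem_centralizer_singleton_iff] at hc ⊢
    have h1 : (c * g * c⁻¹) ^ n = g ^ n := by
      rw [conj_pow]
      rw [mul_inv_eq_iff_eq_mul]; exact hc
    have h2 := hR (c * g * c⁻¹) g n hn h1
    have : c * g = g * c := by
      have := congrArg (· * c) h2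
      simpa [mul_assoc] using this
    exact this
  refine ⟨fwd, le_antisymm fwd ?_⟩
  intro c hc
  rw [Subgroup.mem_centralizer_singleton_iff] at hc ⊢
  exact Commute.pow_right hc n
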